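/- If φ ∈ Φ_ex with γ := γ_φ > 1, then for all x ≥ 0, φ(x) ≤ γ·(γ^x − 1)/(γ − 1)·φ(1), i.e. functions in Φ_ex are dominated by exponentials. -/
import Mathlib


open Set Filter

/-- `Φ`: convex, strictly increasing bijections of `[0,∞)` (with `φ 0 = 0`). -/
def Phi (φ : ℝ → ℝ) : Prop :=
  ConvexOn ℝ (Ici 0) φ ∧ StrictMonoOn φ (Ici 0) ∧
    Set.BijOn φ (Ici 0) (Ici 0) ∧ φ 0 = 0

/-- `γ_φ = sup_{x ≥ 0} φ(1+x)/(φ(1)+φ(x))`, valued in `[0,∞]`. -/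
noncomputable def gam (φ : ℝ → ℝ) : ENNReal :=
  ⨆ x : Ici (0:ℝ), ENNReal.ofReal (φ (1 + x) / (φ 1 + φ x))

/-- If `φ ∈ Φ_ex` with `γ = γ_φ > 1`, then `φ(x) ≤ γ (γ^x − 1)/(γ − 1) · φ(1)`
for all `x ≥ 0`. -/
theorem stmt_10 (φ : ℝ → ℝ) (hφ : Phi φ) (γ : ℝ)
    (hγ : gam φ = ENNReal.ofReal γ) (hγ1 : 1 < γ) :
    ∀ x : ℝ, 0 ≤ x → φ x ≤ γ * (γ ^ x - 1) / (γ - 1) * φ 1 := by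
  obtain ⟨hconv, hmono, hbij, h0⟩ := hφ
  have hγ0 : (0:ℝ) < γ := lt_trans one_pos hγ1
  have hγm : (0:ℝ) < γ - 1 := by linarith
  have hφ1 : 0 < φ 1 := by
    have := hmono (by simp : (0:ℝ) ∈ Ici 0) (by simp : (1:ℝ) ∈ Ici 0) one_pos
    rwa [h0] at this
  have hnn : ∀ y : ℝ, 0 ≤ y → 0 ≤ φ y := fun y hy => hbij.mapsTo hy
  have key : ∀ y : ℝ, 0 ≤ y → φ (1 + y) ≤ γ * (φ 1 + φ y) := by
    intro y hy
    have h1 : ENNReal.ofReal (φ (1 + y) / (φ 1 + φ y)) ≤ ENNReal.ofReal γ := by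
      rw [← hγ]
      exact le_iSup (fun x : Ici (0:ℝ) => ENNReal.ofReal (φ (1 + x) / (φ 1 + φ x))) ⟨y, hy⟩
    have hpos : 0 < φ 1 + φ y := by
      have := hnn y hy; linarith
    have h2 : φ (1 + y) / (φ 1 + φ y) ≤ γ :=
      (ENNReal.ofReal_le_ofReal_iff hγ0.le).mp h1
    rwa [div_le_iff₀ hpos] at h2
  -- convexity bound on [0,1]
  have base : ∀ x : ℝ, 0 ≤ x → x ≤ 1 → φ x ≤ x * φ 1 := by
    intro x hx hx1
    have := hconv.2 (by simp : (0:ℝ) ∈ Ici 0) (by simp : (1:ℝ) ∈ Ici 0)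
      (by linarith : (0:ℝ) ≤ 1 - x) hx (by ring)
    simp only [smul_eq_mul, mul_zero, mul_one, zero_add, h0] at this
    linarith
  -- exponential lower bound: x (γ - 1) ≤ γ (γ^x - 1)
  have expbd : ∀ x : ℝ, 0 ≤ x → x * (γ - 1) ≤ γ * (γ ^ x - 1) := by
    intro x hx
    have hlog : Real.log γ⁻¹ ≤ γ⁻¹ - 1 := Real.log_le_sub_one_of_pos (by positivity)
    rw [Real.log_inv] at hlog
    have hlog2 : γ - 1 ≤ γ * Real.log γ := by
      have h := mul_le_mul_of_nonneg_left hlog hγ0.le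
      have hinv : γ * γ⁻¹ = 1 := mul_inv_cancel₀ (ne_of_gt hγ0)
      nlinarith
    have hexp : 1 + x * Real.log γ ≤ γ ^ x := by
      rw [Real.rpow_def_of_pos hγ0, mul_comm (Real.log γ) x]
      have := Real.add_one_le_exp (x * Real.log γ)
      linarith
    nlinarith [mul_nonneg hx (Real.log_nonneg hγ1.le)]
  have main : ∀ n : ℕ, ∀ x : ℝ, 0 ≤ x → x ≤ n + 1 →
      φ x ≤ γ * (γ ^ x - 1) / (γ - 1) * φ 1 := by
    intro n
    induction n with
    | zero =>
      intro x hx hx1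
      have h1 : φ x ≤ x * φ 1 := base x hx (by simpa using hx1)
      have h2 : x * (γ - 1) ≤ γ * (γ ^ x - 1) := expbd x hx
      have h3 : x ≤ γ * (γ ^ x - 1) / (γ - 1) := by
        rw [le_div_iff₀ hγm]; linarith
      calc φ x ≤ x * φ 1 := h1
        _ ≤ γ * (γ ^ x - 1) / (γ - 1) * φ 1 :=
          mul_le_mul_of_nonneg_right h3 hφ1.le
    | succ n ih =>
      intro x hx hxn
      by_cases hx1 : x ≤ n + 1
      · exact ih x hx hx1
      push_neg at hx1
      have hy : 0 ≤ x - 1 := by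
        have h0n : (0:ℝ) ≤ (n:ℝ) := Nat.cast_nonneg n
        have : (1:ℝ) ≤ (n:ℝ) + 1 := by linarith
        linarith
      have hyn : x - 1 ≤ n + 1 := by push_cast at hxn ⊢; linarith
      have h1 : φ x ≤ γ * (φ 1 + φ (x - 1)) := by
        have := key (x - 1) hy
        simpa using this
      have h2 := ih (x - 1) hy hyn
      have hrw : γ ^ x = γ ^ (x - 1) * γ := by
        have h := Real.rpow_add hγ0 (x - 1) 1
        rw [Real.rpow_one] at h
        rw [← h]
        norm_num
      have h3 : γ * (φ 1 + φ (x - 1)) ≤ γ * (γ ^ x - 1) / (γ - 1) * φ 1 := by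
        have h4 : γ * (φ 1 + φ (x - 1)) ≤
            γ * (φ 1 + γ * (γ ^ (x - 1) - 1) / (γ - 1) * φ 1) := by
          nlinarith
        have h5 : γ * (φ 1 + γ * (γ ^ (x - 1) - 1) / (γ - 1) * φ 1) =
            γ * (γ ^ x - 1) / (γ - 1) * φ 1 := by
          rw [hrw]; field_simp; ring
        linarith
      linarith
  intro x hx
  exact main ⌈x⌉₊ x hx (le_trans (Nat.le_ceil x) (by linarith))
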